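/- Let H be a hypertree in which every hyperedge has size at most k (where k ≥ 2). Then H can be shrunk to a tree T on the same vertex set such that for every vertex v of H, the degree of v in T satisfies d_T(v) ≥ d_H(v)/(2k). -/

import Mathlib

set_option linter.unusedSectionVars false
set_option maxHeartbeats 1000000

open Finset SimpleGraph

namespace HShrink

variable {V : Type*} [Fintype V] [DecidableEq V]

def cnt (E : Multiset (Finset V)) (X : Finset V) : ℕ :=
  Multiset.card (E.filter (fun e => e ⊆ X))

structure HT (E : Multiset (Finset V)) : Prop where
  two_le : ∀ e ∈ E, 2 ≤ e.card
  bound : ∀ X : Finset V, X.Nonempty → cnt E X + 1 ≤ X.card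
  total : Multiset.card E + 1 = Fintype.card V

lemma cnt_cons (a : Finset V) (E : Multiset (Finset V)) (X : Finset V) :
    cnt (a ::ₘ E) X = cnt E X + (if a ⊆ X then 1 else 0) := by
  unfold cnt
  rw [Multiset.filter_cons]
  split_ifs with h
  · simp [h]
  · simp [h]

lemma cnt_erase {e : Finset V} {E : Multiset (Finset V)} (he : e ∈ E) (X : Finset V) :
    cnt (E.erase e) X + (if e ⊆ X then 1 else 0) = cnt E X := by
  conv_rhs => rw [← Multiset.cons_erase he]
  rw [cnt_cons]

lemma cnt_uncross (E : Multiset (Finset V)) (X Y : Finset V) :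
    cnt E X + cnt E Y = Multiset.card (E.filter (fun e => e ⊆ X ∨ e ⊆ Y)) + cnt E (X ∩ Y) := by
  unfold cnt
  rw [← Multiset.card_add, ← Multiset.card_add, Multiset.filter_add_filter]
  congr 2
  apply Multiset.filter_congr
  intro e _
  simp [Finset.subset_inter_iff]

lemma cnt_or_le {E : Multiset (Finset V)} {X Y Z : Finset V} (hXZ : X ⊆ Z) (hYZ : Y ⊆ Z) :
    Multiset.card (E.filter (fun e => e ⊆ X ∨ e ⊆ Y)) ≤ cnt E Z := by
  apply Multiset.card_le_card
  apply Multiset.monotone_filter_right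
  intro e h
  rcases h with h | h
  · exact h.trans hXZ
  · exact h.trans hYZ

/-- The key removal lemma: from a hyperedge of size ≥ 3 one can delete some vertex
keeping the hypertree property. -/
lemma removal {E : Multiset (Finset V)} (hHT : HT E) {e : Finset V} (he : e ∈ E)
    (h3 : 3 ≤ e.card) : ∃ v ∈ e, HT ((e.erase v) ::ₘ E.erase e) := by
  by_contra hcon
  push_neg at hcon
  -- each v ∈ e yields a "blocker" tight set X with e.erase v ⊆ X, v ∉ X
  have hblock : ∀ v ∈ e, ∃ X : Finset V,
      e.erase v ⊆ X ∧ v ∉ X ∧ cnt E X + 1 = X.card := by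
    intro v hv
    have h2' : ∀ f ∈ (e.erase v) ::ₘ E.erase e, 2 ≤ f.card := by
      intro f hf
      rw [Multiset.mem_cons] at hf
      rcases hf with rfl | hf
      · rw [Finset.card_erase_of_mem hv]; omega
      · exact hHT.two_le f (Multiset.mem_of_mem_erase hf)
    have htot' : Multiset.card ((e.erase v) ::ₘ E.erase e) + 1 = Fintype.card V := by
      rw [Multiset.card_cons, Multiset.card_erase_of_mem he]
      have h1 : 0 < Multiset.card E :=
        Multiset.card_pos.mpr (fun h0 => by simp [h0] at he)
      have := hHT.total
      simp only [Nat.pred_eq_sub_one]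
      omega
    have hbad : ∃ X : Finset V, X.Nonempty ∧ X.card < cnt ((e.erase v) ::ₘ E.erase e) X + 1 := by
      by_contra hgood
      push_neg at hgood
      exact hcon v hv ⟨h2', fun X hX => hgood X hX, htot'⟩
    obtain ⟨X, hXne, hXbad⟩ := hbad
    rw [cnt_cons] at hXbad
    have hEX := hHT.bound X hXne
    have hErX := cnt_erase he X
    by_cases hev : e.erase v ⊆ X
    · by_cases heX : e ⊆ X
      · simp [hev, heX] at hXbad hErX
        omega
      · refine ⟨X, hev, ?_, ?_⟩
        · intro hvX
          exact heX (by
            intro x hx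
            by_cases hxv : x = v
            · exact hxv ▸ hvX
            · exact hev (Finset.mem_erase.mpr ⟨hxv, hx⟩))
        · simp only [hev, if_true, heX, if_false, add_zero] at hXbad hErX
          omega
    · simp [hev] at hXbad
      split_ifs at hErX with heX
      · omega
      · omega
  choose Xf hX1 hX2 hX3 using hblock
  -- pick two distinct elements of e
  obtain ⟨u, hu, w, hw, huw⟩ : ∃ u ∈ e, ∃ w ∈ e, u ≠ w := by
    have : 1 < e.card := by omega
    rw [Finset.one_lt_card] at this
    obtain ⟨u, hu, w, hw, huw⟩ := this
    exact ⟨u, hu, w, hw, huw⟩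
  set Xu := Xf u hu
  set Xw := Xf w hw
  -- e ⊆ Xu ∪ Xw
  have heZ : e ⊆ Xu ∪ Xw := by
    intro x hx
    by_cases hxu : x = u
    · exact Finset.mem_union_right _ (hX1 w hw (Finset.mem_erase.mpr ⟨hxu ▸ huw, hx⟩))
    · exact Finset.mem_union_left _ (hX1 u hu (Finset.mem_erase.mpr ⟨hxu, hx⟩))
  have heXu : ¬ e ⊆ Xu := fun h => hX2 u hu (h hu)
  have heXw : ¬ e ⊆ Xw := fun h => hX2 w hw (h hw)
  -- intersection nonempty
  have hInt : (Xu ∩ Xw).Nonempty := by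
    obtain ⟨x, hx⟩ : ((e.erase u).erase w).Nonempty := by
      rw [← Finset.card_pos, Finset.card_erase_of_mem, Finset.card_erase_of_mem hu]
      · omega
      · exact Finset.mem_erase.mpr ⟨(Ne.symm huw), hw⟩
    have hxw := Finset.mem_of_mem_erase hx
    refine ⟨x, Finset.mem_inter.mpr ⟨hX1 u hu hxw, hX1 w hw ?_⟩⟩
    rcases Finset.mem_erase.mp hx with ⟨hxw', hx'⟩
    rcases Finset.mem_erase.mp hx' with ⟨hxu', hxe⟩
    exact Finset.mem_erase.mpr ⟨hxw', hxe⟩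
  have hZne : (Xu ∪ Xw).Nonempty := hInt.mono (Finset.inter_subset_union)
  -- counting contradiction
  have h1 := cnt_uncross E Xu Xw
  have h2 : Multiset.card (E.filter (fun f => f ⊆ Xu ∨ f ⊆ Xw)) + 1 ≤ cnt E (Xu ∪ Xw) := by
    have hsplit : cnt E (Xu ∪ Xw) =
        Multiset.card ((E.filter (fun f => f ⊆ Xu ∪ Xw)).filter (fun f => f ⊆ Xu ∨ f ⊆ Xw)) +
        Multiset.card ((E.filter (fun f => f ⊆ Xu ∪ Xw)).filter (fun f => ¬(f ⊆ Xu ∨ f ⊆ Xw))) := by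
      unfold cnt
      rw [← Multiset.card_add, Multiset.filter_add_not]
    have hfirst : (E.filter (fun f => f ⊆ Xu ∪ Xw)).filter (fun f => f ⊆ Xu ∨ f ⊆ Xw) =
        E.filter (fun f => f ⊆ Xu ∨ f ⊆ Xw) := by
      rw [Multiset.filter_filter]
      apply Multiset.filter_congr
      intro f _
      constructor
      · tauto
      · intro h
        refine ⟨h, ?_⟩
        rcases h with h | h
        · exact h.trans Finset.subset_union_left
        · exact h.trans Finset.subset_union_right
    have hmem : e ∈ (E.filter (fun f => f ⊆ Xu ∪ Xw)).filter (fun f => ¬(f ⊆ Xu ∨ f ⊆ Xw)) := by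
      rw [Multiset.mem_filter, Multiset.mem_filter]
      exact ⟨⟨he, heZ⟩, by tauto⟩
    have hpos : 1 ≤ Multiset.card
        ((E.filter (fun f => f ⊆ Xu ∪ Xw)).filter (fun f => ¬(f ⊆ Xu ∨ f ⊆ Xw))) := by
      rw [Nat.one_le_iff_ne_zero, Ne, Multiset.card_eq_zero]
      intro h0
      rw [h0] at hmem
      exact absurd hmem (Multiset.notMem_zero e)
    rw [hsplit, hfirst]
    omega
  have h3u : cnt E Xu + 1 = Xu.card := hX3 u hu
  have h3w : cnt E Xw + 1 = Xw.card := hX3 w hw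
  have h4 := hHT.bound _ hZne
  have h5 := hHT.bound _ hInt
  have h6 : (Xu ∪ Xw).card + (Xu ∩ Xw).card = Xu.card + Xw.card :=
    Finset.card_union_add_card_inter Xu Xw
  omega

/-- canonical Sym2 of a 2-element Finset -/
noncomputable def σb [Nonempty V] (e : Finset V) : Sym2 V :=
  if h : ∃ x y : V, x ≠ y ∧ e = {x, y} then
    s(h.choose, h.choose_spec.choose)
  else s(Classical.arbitrary V, Classical.arbitrary V)

lemma σb_spec [Nonempty V] {e : Finset V} (h2 : e.card = 2) :
    ∃ x y : V, x ≠ y ∧ e = {x, y} ∧ σb e = s(x, y) := by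
  obtain ⟨x, y, hxy, he⟩ := Finset.card_eq_two.mp h2
  have h : ∃ x y : V, x ≠ y ∧ e = {x, y} := ⟨x, y, hxy, he⟩
  refine ⟨h.choose, h.choose_spec.choose, h.choose_spec.choose_spec.1,
    h.choose_spec.choose_spec.2, ?_⟩
  rw [σb, dif_pos h]

lemma σb_mem [Nonempty V] {e : Finset V} (h2 : e.card = 2) {x : V} (hx : x ∈ σb e) : x ∈ e := by
  obtain ⟨a, b, hab, he, hs⟩ := σb_spec h2
  rw [hs, Sym2.mem_iff] at hx
  rw [he]
  rcases hx with rfl | rfl <;> simp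

lemma σb_not_diag [Nonempty V] {e : Finset V} (h2 : e.card = 2) : ¬ (σb e).IsDiag := by
  obtain ⟨a, b, hab, he, hs⟩ := σb_spec h2
  rw [hs]
  simpa using hab

lemma σb_inj [Nonempty V] {e e' : Finset V} (h2 : e.card = 2) (h2' : e'.card = 2)
    (h : σb e = σb e') : e = e' := by
  obtain ⟨a, b, hab, he, hs⟩ := σb_spec h2
  obtain ⟨a', b', hab', he', hs'⟩ := σb_spec h2'
  rw [hs, hs', Sym2.eq_iff] at h
  rw [he, he']
  rcases h with ⟨rfl, rfl⟩ | ⟨rfl, rfl⟩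
  · rfl
  · exact Finset.pair_comm _ _

/-- base case: a hypertree all of whose edges are pairs is (essentially) a tree -/
lemma base_case [Nonempty V] {E : Multiset (Finset V)} (hHT : HT E)
    (h2 : ∀ e ∈ E, e.card = 2) :
    ∃ F : Multiset (Finset V × Sym2 V),
      F.map Prod.fst = E ∧
      (∀ p ∈ F, (∀ x ∈ p.2, x ∈ p.1) ∧ ¬ p.2.IsDiag) ∧
      (F.map Prod.snd).Nodup ∧
      (SimpleGraph.fromEdgeSet {q | q ∈ F.map Prod.snd}).IsTree ∧
      (SimpleGraph.fromEdgeSet {q | q ∈ F.map Prod.snd}).edgeSet = {q | q ∈ F.map Prod.snd} := by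
  classical
  -- E has no duplicates
  have hnodup : E.Nodup := by
    rw [Multiset.nodup_iff_count_le_one]
    intro e
    by_contra hcount
    push_neg at hcount
    have he : e ∈ E := by
      rw [← Multiset.count_pos]; omega
    have hc2 : 2 ≤ cnt E e := by
      have h1 : Multiset.count e (E.filter (fun f => f ⊆ e)) = Multiset.count e E := by
        rw [Multiset.count_filter_of_pos (p := fun f => f ⊆ e) (Finset.Subset.refl e)]
      have h2' := Multiset.count_le_card e (E.filter (fun f => f ⊆ e))
      unfold cnt
      omega
    have hb := hHT.bound e (Finset.card_pos.mp (by rw [h2 e he]; omega))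
    rw [h2 e he] at hb
    omega
  refine ⟨E.map (fun e => (e, σb e)), ?_, ?_, ?_, ?_, ?_⟩
  · rw [Multiset.map_map]; simp
  · intro p hp
    rw [Multiset.mem_map] at hp
    obtain ⟨e, he, rfl⟩ := hp
    exact ⟨fun x hx => σb_mem (h2 e he) hx, σb_not_diag (h2 e he)⟩
  · rw [Multiset.map_map]
    exact Multiset.Nodup.map_on
      (fun e he e' he' h => σb_inj (h2 e he) (h2 e' he') h) hnodup
  · -- the graph is a tree
    have hQ : {q | q ∈ (E.map (fun e => (e, σb e))).map Prod.snd} = {q : Sym2 V | q ∈ E.map σb} := by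
      rw [Multiset.map_map]
      rfl
    rw [hQ]
    set G := SimpleGraph.fromEdgeSet {q : Sym2 V | q ∈ E.map σb} with hG
    have hedge : ∀ e ∈ E, ∃ x y : V, x ≠ y ∧ e = {x, y} ∧ σb e = s(x, y) ∧ G.Adj x y := by
      intro e he
      obtain ⟨x, y, hxy, hmem, hs⟩ := σb_spec (h2 e he)
      refine ⟨x, y, hxy, hmem, hs, ?_⟩
      rw [hG, SimpleGraph.fromEdgeSet_adj]
      exact ⟨by rw [← hs]; exact Set.mem_setOf.mpr (Multiset.mem_map_of_mem _ he), hxy⟩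
    have hadj_ex : ∀ {x y : V}, G.Adj x y → ∃ e ∈ E, σb e = s(x, y) := by
      intro x y hxy
      rw [hG, SimpleGraph.fromEdgeSet_adj] at hxy
      rw [Set.mem_setOf, Multiset.mem_map] at hxy
      obtain ⟨⟨e, he, hs⟩, _⟩ := hxy
      exact ⟨e, he, hs⟩
    constructor
    · -- connected
      set v₀ := Classical.arbitrary V
      set X : Finset V := Finset.univ.filter (fun u => G.Reachable v₀ u) with hX
      have hv₀ : v₀ ∈ X := by
        rw [hX, Finset.mem_filter]
        exact ⟨Finset.mem_univ _, Reachable.refl _⟩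
      have hclosed : ∀ e ∈ E, e ⊆ X ∨ e ⊆ Xᶜ := by
        intro e he
        obtain ⟨x, y, hxy, hmem, hs, hadj⟩ := hedge e he
        by_cases hx : x ∈ X
        · left
          rw [hmem]
          refine Finset.insert_subset ?_ (Finset.singleton_subset_iff.mpr ?_)
          · exact hx
          · rw [hX, Finset.mem_filter] at hx ⊢
            exact ⟨Finset.mem_univ _, hx.2.trans hadj.reachable⟩
        · right
          have hy : y ∉ X := by
            intro hy
            apply hx
            rw [hX, Finset.mem_filter] at hy ⊢
            exact ⟨Finset.mem_univ _, hy.2.trans hadj.symm.reachable⟩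
          rw [hmem]
          refine Finset.insert_subset (Finset.mem_compl.mpr hx)
            (Finset.singleton_subset_iff.mpr (Finset.mem_compl.mpr hy))
      have hXuniv : X = Finset.univ := by
        by_contra hne
        have hXc : Xᶜ.Nonempty := by
          rw [Finset.nonempty_iff_ne_empty]
          intro h0
          exact hne ((Finset.compl_eq_empty_iff X).mp h0)
        have hcover : Multiset.card E ≤ cnt E X + cnt E Xᶜ := by
          unfold cnt
          rw [← Multiset.card_add, Multiset.filter_add_filter]
          have : E.filter (fun e => e ⊆ X ∨ e ⊆ Xᶜ) = E := by
            rw [Multiset.filter_eq_self]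
            exact hclosed
          rw [this]
          simp
        have hb1 := hHT.bound X ⟨v₀, hv₀⟩
        have hb2 := hHT.bound Xᶜ hXc
        have hcompl : X.card + Xᶜ.card = Fintype.card V := by
          rw [Finset.card_add_card_compl]
        have := hHT.total
        omega
      rw [SimpleGraph.connected_iff]
      refine ⟨fun a b => ?_, ⟨v₀⟩⟩
      have ha : a ∈ X := hXuniv ▸ Finset.mem_univ a
      have hb : b ∈ X := hXuniv ▸ Finset.mem_univ b
      rw [hX, Finset.mem_filter] at ha hb
      exact ha.2.symm.trans hb.2
    · -- acyclic
      intro u c hc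
      have hctrail : c.edges.Nodup := hc.isCircuit.isTrail.edges_nodup
      have hstail : c.support.tail.Nodup := hc.support_nodup
      have hu_tail : u ∈ c.support.tail := by
        cases c with
        | nil => exact absurd rfl hc.isCircuit.ne_nil
        | cons h p =>
          simp only [SimpleGraph.Walk.support_cons, List.tail_cons]
          exact SimpleGraph.Walk.end_mem_support p
      have hsupX : ∀ x ∈ c.support, x ∈ c.support.tail := by
        intro x hx
        rw [SimpleGraph.Walk.support_eq_cons] at hx
        rcases List.mem_cons.mp hx with rfl | hx
        · exact hu_tail
        · exact hx
      set X : Finset V := c.support.tail.toFinset with hXdef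
      have hXcard : X.card = c.length := by
        rw [hXdef, List.toFinset_card_of_nodup hstail]
        have := SimpleGraph.Walk.length_support c
        have htl : c.support.tail.length + 1 = c.support.length := by
          rw [SimpleGraph.Walk.support_eq_cons]
          simp
        omega
      -- map each edge of the cycle to its hyperedge
      set g : Sym2 V → Finset V := fun q =>
        if h : ∃ e ∈ E, σb e = q then h.choose else ∅ with hgdef
      have hg : ∀ q ∈ c.edges, g q ∈ E ∧ σb (g q) = q ∧ g q ⊆ X := by
        intro q hq
        have hqE : q ∈ G.edgeSet := SimpleGraph.Walk.edges_subset_edgeSet c hq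
        have hqQ : ∃ e ∈ E, σb e = q := by
          induction q using Sym2.ind with
          | _ x y =>
            rw [SimpleGraph.mem_edgeSet] at hqE
            exact hadj_ex hqE
        have h1 : g q ∈ E := by rw [hgdef]; simp only [dif_pos hqQ]; exact hqQ.choose_spec.1
        have h2' : σb (g q) = q := by rw [hgdef]; simp only [dif_pos hqQ]; exact hqQ.choose_spec.2
        refine ⟨h1, h2', ?_⟩
        obtain ⟨x, y, hxy, hmem, hs⟩ := σb_spec (h2 _ h1)
        rw [hs] at h2'
        rw [hmem]
        have hx : x ∈ c.support := SimpleGraph.Walk.fst_mem_support_of_mem_edges c (h2' ▸ hq)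
        have hy : y ∈ c.support := SimpleGraph.Walk.snd_mem_support_of_mem_edges c (h2' ▸ hq)
        refine Finset.insert_subset ?_ (Finset.singleton_subset_iff.mpr ?_)
        · rw [hXdef, List.mem_toFinset]; exact hsupX x hx
        · rw [hXdef, List.mem_toFinset]; exact hsupX y hy
      have hLnodup : (c.edges.map g).Nodup := by
        refine List.Nodup.map_on ?_ hctrail
        intro q hq q' hq' hgq
        have h1 := (hg q hq).2.1
        have h2' := (hg q' hq').2.1
        rw [← h1, ← h2', hgq]
      have hcount : c.length ≤ cnt E X := by
        have hsub : (c.edges.map g).toFinset ⊆ (E.filter (fun f => f ⊆ X)).toFinset := by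
          intro f hf
          rw [List.mem_toFinset] at hf
          obtain ⟨q, hq, rfl⟩ := List.mem_map.mp hf
          rw [Multiset.mem_toFinset, Multiset.mem_filter]
          exact ⟨(hg q hq).1, (hg q hq).2.2⟩
        have hc1 := Finset.card_le_card hsub
        rw [List.toFinset_card_of_nodup hLnodup, List.length_map] at hc1
        have hc2 := Multiset.toFinset_card_le (E.filter (fun f => f ⊆ X))
        have hc3 := SimpleGraph.Walk.length_edges c
        unfold cnt
        omega
      have hXne : X.Nonempty := ⟨u, by rw [hXdef, List.mem_toFinset]; exact hu_tail⟩
      have := hHT.bound X hXne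
      omega
  · -- edge set
    rw [SimpleGraph.edgeSet_fromEdgeSet]
    ext q
    simp only [Set.mem_diff, Set.mem_setOf_eq]
    constructor
    · exact fun h => h.1
    · intro hq
      refine ⟨hq, ?_⟩
      rw [Multiset.map_map] at hq
      obtain ⟨e, he, hrfl⟩ := Multiset.mem_map.mp hq
      rw [← hrfl]
      exact σb_not_diag (h2 e he)

/-- every hypertree shrinks to a tree (multiset version) -/
lemma ex_tree [Nonempty V] (N : ℕ) :
    ∀ E : Multiset (Finset V), (E.map Finset.card).sum ≤ N → HT E →
    ∃ F : Multiset (Finset V × Sym2 V),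
      F.map Prod.fst = E ∧
      (∀ p ∈ F, (∀ x ∈ p.2, x ∈ p.1) ∧ ¬ p.2.IsDiag) ∧
      (F.map Prod.snd).Nodup ∧
      (SimpleGraph.fromEdgeSet {q | q ∈ F.map Prod.snd}).IsTree ∧
      (SimpleGraph.fromEdgeSet {q | q ∈ F.map Prod.snd}).edgeSet = {q | q ∈ F.map Prod.snd} := by
  induction N with
  | zero =>
    intro E hsum hHT
    refine base_case hHT ?_
    intro e he
    have h2 := hHT.two_le e he
    have : e.card ≤ (E.map Finset.card).sum := Multiset.le_sum_of_mem (Multiset.mem_map_of_mem _ he)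
    omega
  | succ N ih =>
    intro E hsum hHT
    by_cases hbig : ∃ e ∈ E, 3 ≤ e.card
    · obtain ⟨e, he, h3⟩ := hbig
      obtain ⟨v, hv, hHT'⟩ := removal hHT he h3
      set E' := (e.erase v) ::ₘ E.erase e with hE'
      have hsum' : (E'.map Finset.card).sum ≤ N := by
        have hE : E = e ::ₘ E.erase e := (Multiset.cons_erase he).symm
        have h1 : (E.map Finset.card).sum = e.card + ((E.erase e).map Finset.card).sum := by
          conv_lhs => rw [hE]
          rw [Multiset.map_cons, Multiset.sum_cons]
        have h2 : (E'.map Finset.card).sum = (e.card - 1) + ((E.erase e).map Finset.card).sum := by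
          rw [hE', Multiset.map_cons, Multiset.sum_cons, Finset.card_erase_of_mem hv]
        omega
      obtain ⟨F', hfst, hprops, hnodup, htree, hedge⟩ := ih E' hsum' hHT'
      -- find the entry of F' with first component e.erase v
      have hmem : e.erase v ∈ F'.map Prod.fst := by
        rw [hfst, hE']
        exact Multiset.mem_cons_self _ _
      obtain ⟨p, hp, hp1⟩ := Multiset.mem_map.mp hmem
      obtain ⟨F'', hF''⟩ := Multiset.exists_cons_of_mem hp
      refine ⟨(e, p.2) ::ₘ F'', ?_, ?_, ?_, ?_, ?_⟩
      · -- map fst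
        have h1 : F'.map Prod.fst = (e.erase v) ::ₘ F''.map Prod.fst := by
          rw [hF'', Multiset.map_cons, hp1]
        rw [hfst, hE'] at h1
        have h2 : F''.map Prod.fst = E.erase e := (Multiset.cons_inj_right _).mp h1.symm
        rw [Multiset.map_cons, h2]
        exact Multiset.cons_erase he
      · -- membership properties
        intro q hq
        rcases Multiset.mem_cons.mp hq with rfl | hq
        · have := hprops p hp
          refine ⟨fun x hx => ?_, this.2⟩
          have : x ∈ p.1 := this.1 x hx
          rw [hp1] at this
          exact Finset.mem_of_mem_erase this
        · exact hprops q (by rw [hF'']; exact Multiset.mem_cons_of_mem hq)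
      · -- snd nodup
        have : ((e, p.2) ::ₘ F'').map Prod.snd = F'.map Prod.snd := by
          rw [hF'', Multiset.map_cons, Multiset.map_cons]
        rw [this]
        exact hnodup
      · have : ((e, p.2) ::ₘ F'').map Prod.snd = F'.map Prod.snd := by
          rw [hF'', Multiset.map_cons, Multiset.map_cons]
        rw [this]
        exact htree
      · have : ((e, p.2) ::ₘ F'').map Prod.snd = F'.map Prod.snd := by
          rw [hF'', Multiset.map_cons, Multiset.map_cons]
        rw [this]
        exact hedge
    · push_neg at hbig
      refine base_case hHT ?_
      intro e he
      have := hHT.two_le e he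
      have := hbig e he
      omega

section Shrinks

variable [Nonempty V] (k : ℕ) (E : Finset (Finset V))

/-- hypergraph degree -/
def dH (v : V) : ℕ := (E.filter (fun e => v ∈ e)).card

/-- the graph obtained from a shrinking function -/
def Tof (σ : Finset V → Sym2 V) : SimpleGraph V :=
  SimpleGraph.fromEdgeSet (σ '' (E : Set (Finset V)))

/-- a valid shrinking -/
def Good (σ : Finset V → Sym2 V) : Prop :=
  (∀ e ∈ E, ∀ x ∈ σ e, x ∈ e) ∧ (∀ e ∈ E, ¬ (σ e).IsDiag) ∧
  Set.InjOn σ (E : Set (Finset V)) ∧ (Tof E σ).IsTree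

/-- tree degree via the shrinking function -/
def dT (σ : Finset V → Sym2 V) (v : V) : ℕ := (E.filter (fun e => v ∈ σ e)).card

/-- degree target -/
def tval (v : V) : ℕ := (dH E v + (2 * k - 1)) / (2 * k)

/-- the potential function -/
def Φ (σ : Finset V → Sym2 V) : ℕ := ∑ u : V, min (dT E σ u) (tval k E u)

variable {k E}

lemma tval_lt_iff (hk : 2 ≤ k) (v : V) (d : ℕ) :
    d < tval k E v ↔ 2 * k * d < dH E v := by
  unfold tval
  have hm : 0 < 2 * k := by omega
  have h : d + 1 ≤ (dH E v + (2 * k - 1)) / (2 * k) ↔ (d + 1) * (2 * k) ≤ dH E v + (2 * k - 1) :=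
    Nat.le_div_iff_mul_le hm
  have hexp : (d + 1) * (2 * k) = 2 * k * d + 2 * k := by ring
  omega

lemma edgeSet_Tof {σ : Finset V → Sym2 V} (hdiag : ∀ e ∈ E, ¬ (σ e).IsDiag) :
    (Tof E σ).edgeSet = σ '' (E : Set (Finset V)) := by
  rw [Tof, SimpleGraph.edgeSet_fromEdgeSet]
  ext q
  simp only [Set.mem_diff, Set.mem_setOf_eq]
  constructor
  · exact fun h => h.1
  · intro hq
    refine ⟨hq, ?_⟩
    obtain ⟨e, he, rfl⟩ := hq
    exact hdiag e he

lemma ex_good (hsimple : ∀ e ∈ E, 2 ≤ e.card)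
    (hsub : ∀ X : Finset V, (E.filter (fun e => e ⊆ X)).card ≤ X.card - 1)
    (hfull : E.card = Fintype.card V - 1) :
    ∃ σ : Finset V → Sym2 V, Good E σ := by
  classical
  have hn : 1 ≤ Fintype.card V := Fintype.card_pos
  have hHT : HT E.val := by
    refine ⟨fun e he => hsimple e he, ?_, ?_⟩
    · intro X hX
      have h1 := hsub X
      have h2 : (E.filter (fun e => e ⊆ X)).card = Multiset.card (E.val.filter (fun e => e ⊆ X)) := rfl
      have h3 : 1 ≤ X.card := Finset.card_pos.mpr hX
      unfold cnt
      omega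
    · have : E.card = Multiset.card E.val := rfl
      omega
  obtain ⟨F, hfst, hprops, hnodup, htree, hedge⟩ :=
    ex_tree (E.val.map Finset.card).sum E.val le_rfl hHT
  have hfstnodup : (F.map Prod.fst).Nodup := by rw [hfst]; exact E.nodup
  have hfstinj : ∀ p ∈ F, ∀ p' ∈ F, p.1 = p'.1 → p = p' := by
    intro p hp p' hp' h
    exact Multiset.inj_on_of_nodup_map hfstnodup p hp p' hp' h
  have hsndinj : ∀ p ∈ F, ∀ p' ∈ F, p.2 = p'.2 → p = p' := by
    intro p hp p' hp' h
    exact Multiset.inj_on_of_nodup_map hnodup p hp p' hp' h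
  set σ : Finset V → Sym2 V := fun e =>
    if h : ∃ q, (e, q) ∈ F then h.choose else
      s(Classical.arbitrary V, Classical.arbitrary V) with hσdef
  have hσ : ∀ e ∈ E, (e, σ e) ∈ F := by
    intro e he
    have h1 : e ∈ F.map Prod.fst := by rw [hfst]; exact he
    obtain ⟨p, hp, hp1⟩ := Multiset.mem_map.mp h1
    have h2 : ∃ q, (e, q) ∈ F := ⟨p.2, by rwa [← hp1]⟩
    rw [hσdef]
    simp only [dif_pos h2]
    exact h2.choose_spec
  have hmem : ∀ e ∈ E, ∀ x ∈ σ e, x ∈ e := by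
    intro e he x hx
    exact ((hprops _ (hσ e he)).1 x hx : x ∈ e)
  have hdiag : ∀ e ∈ E, ¬ (σ e).IsDiag := fun e he => (hprops _ (hσ e he)).2
  have hinj : Set.InjOn σ (E : Set (Finset V)) := by
    intro e he e' he' h
    have h1 := hσ e he
    have h2 := hσ e' he'
    have := hsndinj _ h1 _ h2 (by simpa using h)
    exact congrArg Prod.fst this
  have hset : σ '' (E : Set (Finset V)) = {q | q ∈ F.map Prod.snd} := by
    ext q
    constructor
    · rintro ⟨e, he, rfl⟩
      exact Multiset.mem_map_of_mem Prod.snd (hσ e he)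
    · intro hq
      obtain ⟨p, hp, hp2⟩ := Multiset.mem_map.mp hq
      have he : p.1 ∈ E := by
        have : p.1 ∈ F.map Prod.fst := Multiset.mem_map_of_mem Prod.fst hp
        rwa [hfst] at this
      have h1 := hσ p.1 he
      have h2 := hfstinj _ hp _ h1 rfl
      exact ⟨p.1, he, by rw [← hp2, h2]⟩
  refine ⟨σ, hmem, hdiag, hinj, ?_⟩
  rw [Tof, hset]
  exact htree

/-- the other endpoint of `σ e` -/
noncomputable def oth (σ : Finset V → Sym2 V) (e : Finset V) (v : V) : V :=
  if h : v ∈ σ e then Sym2.Mem.other' h else v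

lemma oth_spec {σ : Finset V → Sym2 V} {e : Finset V} {v : V} (h : v ∈ σ e) :
    s(v, oth σ e v) = σ e := by
  rw [oth, dif_pos h]
  exact Sym2.other_spec' h

lemma ncard_neighbor {σ : Finset V → Sym2 V} (hG : Good E σ) (v : V) :
    ((Tof E σ).neighborSet v).ncard = dT E σ v := by
  classical
  obtain ⟨hmem, hdiag, hinj, htree⟩ := hG
  have hES : (Tof E σ).edgeSet = σ '' (E : Set (Finset V)) := edgeSet_Tof hdiag
  have hAdj : ∀ u, (Tof E σ).Adj v u ↔ ∃ e ∈ E, σ e = s(v, u) := by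
    intro u
    rw [← SimpleGraph.mem_edgeSet, hES]
    constructor
    · rintro ⟨e, he, hq⟩
      exact ⟨e, he, hq⟩
    · rintro ⟨e, he, hq⟩
      exact ⟨e, he, hq⟩
  have hset : (Tof E σ).neighborSet v =
      (fun e => oth σ e v) '' ((E.filter (fun e => v ∈ σ e)) : Set (Finset V)) := by
    ext u
    simp only [SimpleGraph.mem_neighborSet, Set.mem_image, Finset.coe_filter, Set.mem_setOf_eq]
    constructor
    · intro hadj
      have hvu : v ≠ u := (Tof E σ).ne_of_adj hadj
      obtain ⟨e, he, hq⟩ := (hAdj u).mp hadj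
      have hv : v ∈ σ e := by rw [hq]; exact Sym2.mem_mk_left _ _
      refine ⟨e, ⟨he, hv⟩, ?_⟩
      have := oth_spec hv
      rw [hq, Sym2.eq_iff] at this
      rcases this with ⟨_, h2⟩ | ⟨h1, h2⟩
      · exact h2
      · exact absurd h1 hvu
    · rintro ⟨e, ⟨he, hv⟩, rfl⟩
      have hne : oth σ e v ≠ v := by
        rw [oth, dif_pos hv, ← Sym2.other_eq_other']
        exact Sym2.other_ne (hdiag e he) hv
      apply (hAdj _).mpr
      exact ⟨e, he, (oth_spec hv).symm⟩
  rw [hset, Set.ncard_image_of_injOn, Set.ncard_coe_finset]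
  · rfl
  · intro e he e' he' h
    simp only [Finset.coe_filter, Set.mem_setOf_eq] at he he'
    apply hinj he.1 he'.1
    have h2 : oth σ e v = oth σ e' v := h
    rw [← oth_spec he.2, ← oth_spec he'.2, h2]

lemma reach_del_aux {G : SimpleGraph V} {a b : V} :
    ∀ {x y : V}, G.Walk x y →
      (G \ SimpleGraph.fromEdgeSet {s(a, b)}).Reachable x y ∨
      ((G \ SimpleGraph.fromEdgeSet {s(a, b)}).Reachable x a ∧
        (G \ SimpleGraph.fromEdgeSet {s(a, b)}).Reachable b y) ∨
      ((G \ SimpleGraph.fromEdgeSet {s(a, b)}).Reachable x b ∧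
        (G \ SimpleGraph.fromEdgeSet {s(a, b)}).Reachable a y) := by
  intro x y w
  induction w with
  | nil => exact Or.inl (Reachable.refl _)
  | @cons x z y hadj p ih =>
    by_cases hq : s(x, z) = s(a, b)
    · rw [Sym2.eq_iff] at hq
      rcases hq with ⟨rfl, rfl⟩ | ⟨rfl, rfl⟩
      · rcases ih with h | ⟨h1, h2⟩ | ⟨h1, h2⟩
        · exact Or.inr (Or.inl ⟨Reachable.refl _, h⟩)
        · exact Or.inr (Or.inl ⟨Reachable.refl _, h2⟩)
        · exact Or.inl h2
      · rcases ih with h | ⟨h1, h2⟩ | ⟨h1, h2⟩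
        · exact Or.inr (Or.inr ⟨Reachable.refl _, h⟩)
        · exact Or.inl h2
        · exact Or.inr (Or.inr ⟨Reachable.refl _, h2⟩)
    · have hadj' : (G \ SimpleGraph.fromEdgeSet {s(a, b)}).Adj x z := by
        rw [SimpleGraph.sdiff_adj, SimpleGraph.fromEdgeSet_adj]
        exact ⟨hadj, fun hcon => hq hcon.1⟩
      rcases ih with h | ⟨h1, h2⟩ | ⟨h1, h2⟩
      · exact Or.inl (hadj'.reachable.trans h)
      · exact Or.inr (Or.inl ⟨hadj'.reachable.trans h1, h2⟩)
      · exact Or.inr (Or.inr ⟨hadj'.reachable.trans h1, h2⟩)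

/-- walks survive deleting an edge, up to choosing the right endpoint -/
lemma reachable_delete_endpoints {G : SimpleGraph V} {a b x : V} (hxa : G.Reachable x a) :
    (G \ SimpleGraph.fromEdgeSet {s(a, b)}).Reachable x a ∨
    (G \ SimpleGraph.fromEdgeSet {s(a, b)}).Reachable x b := by
  obtain ⟨w⟩ := hxa
  rcases reach_del_aux (a := a) (b := b) w with h | ⟨h1, h2⟩ | ⟨h1, h2⟩
  · exact Or.inl h
  · exact Or.inl h1
  · exact Or.inr h1

lemma dT_update {σ : Finset V → Sym2 V} {e : Finset V} (he : e ∈ E) (q : Sym2 V) (u : V) :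
    dT E (Function.update σ e q) u + (if u ∈ σ e then 1 else 0) =
      dT E σ u + (if u ∈ q then 1 else 0) := by
  classical
  have h1 : ∀ τ : Finset V → Sym2 V, E.filter (fun x => u ∈ τ x) =
      if u ∈ τ e then insert e ((E.erase e).filter (fun x => u ∈ τ x))
      else (E.erase e).filter (fun x => u ∈ τ x) := by
    intro τ
    conv_lhs => rw [← Finset.insert_erase he]
    rw [Finset.filter_insert]
  have hnot : e ∉ (E.erase e).filter (fun x => u ∈ σ x) := by
    intro h
    exact absurd (Finset.mem_of_mem_filter e h) (Finset.notMem_erase e E)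
  have hnot' : e ∉ (E.erase e).filter (fun x => u ∈ Function.update σ e q x) := by
    intro h
    exact absurd (Finset.mem_of_mem_filter e h) (Finset.notMem_erase e E)
  have h2 : (E.erase e).filter (fun x => u ∈ Function.update σ e q x) =
      (E.erase e).filter (fun x => u ∈ σ x) := by
    apply Finset.filter_congr
    intro x hx
    rw [Function.update_of_ne (Finset.ne_of_mem_erase hx)]
  unfold dT
  rw [h1 σ, h1 (Function.update σ e q), h2, Function.update_self]
  by_cases hq : u ∈ q <;> by_cases hs : u ∈ σ e <;>
    simp [hq, hs, Finset.card_insert_of_notMem hnot]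

lemma swap_good {σ : Finset V → Sym2 V} {e : Finset V} {s a b : V}
    (hG : Good E σ) (he : e ∈ E) (hse : s ∈ e) (hns : s ∉ σ e)
    (hab : σ e = s(a, b))
    (hside : ((Tof E σ) \ SimpleGraph.fromEdgeSet {σ e}).Reachable s a) :
    Good E (Function.update σ e s(s, b)) ∧ 2 ≤ dT E σ a := by
  classical
  obtain ⟨hmem, hdiag, hinj, htree⟩ := hG
  rw [hab] at hside
  have hsa : s ≠ a := by intro h; apply hns; rw [hab, h]; exact Sym2.mem_mk_left _ _
  have hsb : s ≠ b := by intro h; apply hns; rw [hab, h]; exact Sym2.mem_mk_right _ _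
  have hba : a ≠ b := by
    intro h
    apply hdiag e he
    rw [hab, h]
    exact Sym2.mk_isDiag_iff.mpr rfl
  have hES : (Tof E σ).edgeSet = σ '' (E : Set (Finset V)) := edgeSet_Tof hdiag
  have hqE : s(a, b) ∈ (Tof E σ).edgeSet := by rw [hES]; exact ⟨e, he, hab⟩
  have hadjab : (Tof E σ).Adj a b := hqE
  have hbridge : ¬ ((Tof E σ) \ SimpleGraph.fromEdgeSet {s(a, b)}).Reachable a b := by
    have hacyc := htree.IsAcyclic
    rw [SimpleGraph.isAcyclic_iff_forall_adj_isBridge] at hacyc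
    exact (SimpleGraph.isBridge_iff).mp (hacyc hadjab)
  have hnsb : ¬ ((Tof E σ) \ SimpleGraph.fromEdgeSet {s(a, b)}).Reachable s b :=
    fun h => hbridge (hside.symm.trans h)
  have hsbne : s(s, b) ≠ s(a, b) := by
    intro h
    rw [Sym2.eq_iff] at h
    rcases h with ⟨rfl, _⟩ | ⟨rfl, h2⟩
    · exact hsa rfl
    · exact hba h2.symm
  have hsbE : s(s, b) ∉ (Tof E σ).edgeSet := by
    intro h
    apply hnsb
    apply SimpleGraph.Adj.reachable
    rw [SimpleGraph.sdiff_adj, SimpleGraph.fromEdgeSet_adj]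
    exact ⟨h, fun hcon => hsbne hcon.1⟩
  have hσ'e : Function.update σ e s(s, b) e = s(s, b) := Function.update_self e _ σ
  have hσ'ne : ∀ x, x ≠ e → Function.update σ e s(s, b) x = σ x :=
    fun x hx => Function.update_of_ne hx _ σ
  -- the new image
  have himg : Function.update σ e s(s, b) '' (E : Set (Finset V)) =
      insert s(s, b) ((σ '' (E : Set (Finset V))) \ {s(a, b)}) := by
    ext x
    constructor
    · rintro ⟨f, hf, rfl⟩
      by_cases hfe : f = e
      · rw [hfe, hσ'e]; exact Set.mem_insert _ _
      · rw [hσ'ne f hfe]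
        apply Set.mem_insert_of_mem
        refine ⟨⟨f, hf, rfl⟩, ?_⟩
        intro hcon
        rw [Set.mem_singleton_iff] at hcon
        rw [← hab] at hcon
        exact hfe (hinj hf he hcon)
    · intro hx
      rcases Set.mem_insert_iff.mp hx with rfl | ⟨⟨f, hf, rfl⟩, hne⟩
      · exact ⟨e, he, hσ'e⟩
      · rw [Set.mem_singleton_iff] at hne
        have hfe : f ≠ e := fun h => hne (by rw [h, hab])
        exact ⟨f, hf, hσ'ne f hfe⟩
  have hmem' : ∀ f ∈ E, ∀ x ∈ Function.update σ e s(s, b) f, x ∈ f := by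
    intro f hf x hx
    by_cases hfe : f = e
    · have hx' : x ∈ s(s, b) := by rw [hfe, hσ'e] at hx; exact hx
      rw [hfe]
      rcases Sym2.mem_iff.mp hx' with h | h
      · rw [h]; exact hse
      · rw [h]; exact hmem e he b (by rw [hab]; exact Sym2.mem_mk_right _ _)
    · exact hmem f hf x (by rwa [hσ'ne f hfe] at hx)
  have hdiag' : ∀ f ∈ E, ¬ (Function.update σ e s(s, b) f).IsDiag := by
    intro f hf
    by_cases hfe : f = e
    · rw [hfe, hσ'e]
      simpa using hsb
    · rw [hσ'ne f hfe]; exact hdiag f hf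
  have hinj' : Set.InjOn (Function.update σ e s(s, b)) (E : Set (Finset V)) := by
    intro x hx y hy hxy
    by_cases hxe : x = e <;> by_cases hye : y = e
    · rw [hxe, hye]
    · exfalso
      rw [hxe, hσ'e, hσ'ne y hye] at hxy
      apply hsbE
      rw [hES, hxy]
      exact ⟨y, hy, rfl⟩
    · exfalso
      rw [hye, hσ'e, hσ'ne x hxe] at hxy
      apply hsbE
      rw [hES, ← hxy]
      exact ⟨x, hx, rfl⟩
    · rw [hσ'ne x hxe, hσ'ne y hye] at hxy
      exact hinj hx hy hxy
  have hES' : (Tof E (Function.update σ e s(s, b))).edgeSet =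
      insert s(s, b) ((σ '' (E : Set (Finset V))) \ {s(a, b)}) := by
    rw [edgeSet_Tof hdiag', himg]
  -- Del is a subgraph of T'
  have hDelle : ((Tof E σ) \ SimpleGraph.fromEdgeSet {s(a, b)}) ≤
      Tof E (Function.update σ e s(s, b)) := by
    intro u w huw
    rw [SimpleGraph.sdiff_adj, SimpleGraph.fromEdgeSet_adj] at huw
    rw [← SimpleGraph.mem_edgeSet, hES']
    apply Set.mem_insert_of_mem
    refine ⟨by rw [← hES]; exact huw.1, ?_⟩
    intro hcon
    rw [Set.mem_singleton_iff] at hcon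
    exact huw.2 ⟨hcon, huw.1.ne⟩
  have hadjsb' : (Tof E (Function.update σ e s(s, b))).Adj s b := by
    rw [← SimpleGraph.mem_edgeSet, hES']
    exact Set.mem_insert _ _
  have hreachab' : (Tof E (Function.update σ e s(s, b))).Reachable a b :=
    ((hside.mono hDelle).symm).trans hadjsb'.reachable
  -- connectivity
  have htw : ∀ {x y : V}, (Tof E σ).Walk x y →
      (Tof E (Function.update σ e s(s, b))).Reachable x y := by
    intro x y w
    induction w with
    | nil => exact Reachable.refl _
    | @cons x z y hadj p ih =>
      by_cases hxz : s(x, z) = s(a, b)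
      · rw [Sym2.eq_iff] at hxz
        rcases hxz with ⟨rfl, rfl⟩ | ⟨rfl, rfl⟩
        · exact hreachab'.trans ih
        · exact hreachab'.symm.trans ih
      · have hadj' : ((Tof E σ) \ SimpleGraph.fromEdgeSet {s(a, b)}).Adj x z := by
          rw [SimpleGraph.sdiff_adj, SimpleGraph.fromEdgeSet_adj]
          exact ⟨hadj, fun hcon => hxz hcon.1⟩
        exact ((hDelle hadj').reachable).trans ih
  have hconn' : (Tof E (Function.update σ e s(s, b))).Connected := by
    rw [SimpleGraph.connected_iff]
    refine ⟨fun x y => ?_, htree.isConnected.nonempty⟩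
    obtain ⟨w⟩ := htree.isConnected.preconnected x y
    exact htw w
  -- acyclicity
  have hdeleq : (Tof E (Function.update σ e s(s, b))) \ SimpleGraph.fromEdgeSet {s(s, b)} =
      (Tof E σ) \ SimpleGraph.fromEdgeSet {s(a, b)} := by
    apply SimpleGraph.edgeSet_inj.mp
    have h1 : ((Tof E (Function.update σ e s(s, b))) \ SimpleGraph.fromEdgeSet {s(s, b)}).edgeSet =
        (Tof E (Function.update σ e s(s, b))).edgeSet \ {s(s, b)} := by
      rw [SimpleGraph.edgeSet_sdiff, SimpleGraph.edgeSet_fromEdgeSet,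
        SimpleGraph.edgeSet_sdiff_sdiff_isDiag]
    have h2 : ((Tof E σ) \ SimpleGraph.fromEdgeSet {s(a, b)}).edgeSet =
        (Tof E σ).edgeSet \ {s(a, b)} := by
      rw [SimpleGraph.edgeSet_sdiff, SimpleGraph.edgeSet_fromEdgeSet,
        SimpleGraph.edgeSet_sdiff_sdiff_isDiag]
    rw [h1, h2, hES', hES]
    apply Set.insert_diff_self_of_notMem
    intro hcon
    exact hsbE (by rw [hES]; exact hcon.1)
  have hbridge' : (Tof E (Function.update σ e s(s, b))).IsBridge s(s, b) := by
    rw [SimpleGraph.isBridge_iff]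
    change ¬ ((Tof E (Function.update σ e s(s, b))) \ SimpleGraph.fromEdgeSet {s(s, b)}).Reachable s b
    rw [hdeleq]
    exact hnsb
  have hacyc' : (Tof E (Function.update σ e s(s, b))).IsAcyclic := by
    intro u c hc
    by_cases hsbc : s(s, b) ∈ c.edges
    · rw [SimpleGraph.isBridge_iff_adj_and_forall_cycle_notMem] at hbridge'
      exact hbridge' c hc hsbc
      exact hadjsb'
    · have hsub : ∀ x ∈ c.edges, x ∈ (Tof E σ).edgeSet := by
        intro x hx
        have h1 := c.edges_subset_edgeSet hx
        rw [hES'] at h1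
        rcases Set.mem_insert_iff.mp h1 with rfl | h1
        · exact absurd hx hsbc
        · rw [hES]; exact h1.1
      exact htree.IsAcyclic (c.transfer _ hsub) (hc.transfer hsub)
  -- degree of a is at least 2
  have hdeg : 2 ≤ dT E σ a := by
    obtain ⟨w⟩ := hside.symm
    cases w with
    | nil => exact absurd rfl hsa.symm
    | @cons _ z _ hadj p =>
      have hzb : z ≠ b := by
        intro hzb
        subst hzb
        rw [SimpleGraph.sdiff_adj, SimpleGraph.fromEdgeSet_adj] at hadj
        exact hadj.2 ⟨rfl, hba⟩
      have hTaz : (Tof E σ).Adj a z := by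
        rw [SimpleGraph.sdiff_adj] at hadj
        exact hadj.1
      have hsubnb : ({z, b} : Set V) ⊆ (Tof E σ).neighborSet a := by
        intro x hx
        rcases hx with rfl | hx
        · exact hTaz
        · rw [Set.mem_singleton_iff] at hx
          rw [hx]
          exact hadjab
      have h2 : ({z, b} : Set V).ncard = 2 := Set.ncard_pair hzb
      have hle := Set.ncard_le_ncard hsubnb (Set.toFinite _)
      rw [h2] at hle
      rwa [ncard_neighbor ⟨hmem, hdiag, hinj, htree⟩ a] at hle
  exact ⟨⟨hmem', hdiag', hinj', hconn', hacyc'⟩, hdeg⟩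

lemma phi_eq_of {σ σ' : Finset V → Sym2 V} {s a : V} (hsa : s ≠ a)
    (h3 : ∀ u, u ≠ s → u ≠ a → dT E σ' u = dT E σ u) :
    Φ k E σ' + min (dT E σ s) (tval k E s) + min (dT E σ a) (tval k E a) =
    Φ k E σ + min (dT E σ' s) (tval k E s) + min (dT E σ' a) (tval k E a) := by
  classical
  have key : ∀ τ : Finset V → Sym2 V, Φ k E τ =
      min (dT E τ s) (tval k E s) + (min (dT E τ a) (tval k E a) +
        ∑ u ∈ (Finset.univ.erase s).erase a, min (dT E τ u) (tval k E u)) := by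
    intro τ
    rw [Φ, ← Finset.add_sum_erase _ _ (Finset.mem_univ s)]
    congr 1
    rw [← Finset.add_sum_erase _ _ (Finset.mem_erase.mpr ⟨(Ne.symm hsa), Finset.mem_univ a⟩)]
  have htail : ∑ u ∈ (Finset.univ.erase s).erase a, min (dT E σ' u) (tval k E u) =
      ∑ u ∈ (Finset.univ.erase s).erase a, min (dT E σ u) (tval k E u) := by
    apply Finset.sum_congr rfl
    intro u hu
    rcases Finset.mem_erase.mp hu with ⟨hua, hu'⟩
    rcases Finset.mem_erase.mp hu' with ⟨hus, _⟩
    rw [h3 u hus hua]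
  rw [key σ, key σ', htail]
  omega

end Shrinks

section CascSec

variable [Nonempty V]

/-- cascade of degree-preserving swaps starting from a deficient vertex -/
inductive Casc (k : ℕ) (E : Finset (Finset V)) (σ₀ : Finset V → Sym2 V) (v : V) :
    (Finset V → Sym2 V) → V → Prop
  | base : Casc k E σ₀ v σ₀ v
  | step {σ' : Finset V → Sym2 V} {s : V} (e : Finset V) (a b : V)
      (hc : Casc k E σ₀ v σ' s) (he : e ∈ E) (hse : s ∈ e) (hns : s ∉ σ' e)
      (hab : σ' e = s(a, b))
      (hside : ((Tof E σ') \ SimpleGraph.fromEdgeSet {σ' e}).Reachable s a) :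
      Casc k E σ₀ v (Function.update σ' e s(s, b)) a

variable {k : ℕ} {E : Finset (Finset V)} {σ₀ : Finset V → Sym2 V} {v : V}

/-- all the invariants of cascade states -/
lemma casc_inv (hk : 2 ≤ k) (hG0 : Good E σ₀)
    (hmax : ∀ τ : Finset V → Sym2 V, Good E τ → Φ k E τ ≤ Φ k E σ₀)
    (hdef : 2 * k * dT E σ₀ v < dH E v) :
    ∀ {σ' : Finset V → Sym2 V} {t : V}, Casc k E σ₀ v σ' t →
      Good E σ' ∧ Φ k E σ' = Φ k E σ₀ ∧
      (∀ u, u ≠ v → u ≠ t → dT E σ' u = dT E σ₀ u) ∧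
      ((t = v ∧ ∀ u, dT E σ' u = dT E σ₀ u) ∨
        (t ≠ v ∧ dT E σ' v = dT E σ₀ v + 1 ∧ dT E σ' t + 1 = dT E σ₀ t)) ∧
      2 * k * dT E σ' t < dH E t ∧
      (t ≠ v → 2 ≤ dT E σ₀ t) ∧
      (∀ f ∈ E, σ' f ≠ σ₀ f → ∃ x, x ∈ σ₀ f ∧ ∃ σ'' t'', Casc k E σ₀ v σ'' t'' ∧ t'' = x) := by
  intro σ' t hc
  induction hc with
  | base =>
    refine ⟨hG0, rfl, fun u _ _ => rfl, Or.inl ⟨rfl, fun u => rfl⟩, hdef, ?_, ?_⟩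
    · intro h; exact absurd rfl h
    · intro f _ h; exact absurd rfl h
  | @step σ' s e a b hc he hse hns hab hside ih =>
    obtain ⟨hGood, hphi0, hprof3, hprof4, hdefs, hdeg2, hspoil⟩ := ih
    have hsa : s ≠ a := by
      intro h; apply hns; rw [hab, h]; exact Sym2.mem_mk_left _ _
    have hsb : s ≠ b := by
      intro h; apply hns; rw [hab, h]; exact Sym2.mem_mk_right _ _
    have hba : a ≠ b := by
      intro h
      apply hGood.2.1 e he
      rw [hab, h]
      exact Sym2.mk_isDiag_iff.mpr rfl
    obtain ⟨hGood', hdeg2'⟩ := swap_good hGood he hse hns hab hside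
    -- degree bookkeeping
    have hupds : dT E (Function.update σ' e s(s, b)) s = dT E σ' s + 1 := by
      have h := dT_update (σ := σ') he s(s, b) s
      rw [if_neg hns, if_pos (Sym2.mem_mk_left s b)] at h
      omega
    have hupda : dT E (Function.update σ' e s(s, b)) a + 1 = dT E σ' a := by
      have h := dT_update (σ := σ') he s(s, b) a
      rw [if_pos (by rw [hab]; exact Sym2.mem_mk_left a b),
        if_neg (by rw [Sym2.mem_iff]; push_neg; exact ⟨Ne.symm hsa, hba⟩)] at h
      omega
    have hupdo : ∀ u, u ≠ s → u ≠ a → dT E (Function.update σ' e s(s, b)) u = dT E σ' u := by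
      intro u hus hua
      have h := dT_update (σ := σ') he s(s, b) u
      by_cases hub : u = b
      · rw [if_pos (by rw [hab, hub]; exact Sym2.mem_mk_right a b),
          if_pos (by rw [hub]; exact Sym2.mem_mk_right s b)] at h
        omega
      · rw [if_neg (by rw [hab, Sym2.mem_iff]; push_neg; exact ⟨hua, hub⟩),
          if_neg (by rw [Sym2.mem_iff]; push_neg; exact ⟨hus, hub⟩)] at h
        omega
    -- Φ analysis
    have hgain : dT E σ' s < tval k E s := (tval_lt_iff hk s _).mpr hdefs
    have hphile : Φ k E (Function.update σ' e s(s, b)) ≤ Φ k E σ' := by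
      rw [hphi0]
      exact hmax _ hGood'
    have hphieq := phi_eq_of (k := k) (σ := σ') (σ' := Function.update σ' e s(s, b)) hsa hupdo
    have hmins : min (dT E (Function.update σ' e s(s, b)) s) (tval k E s) =
        min (dT E σ' s) (tval k E s) + 1 := by
      rw [hupds]
      omega
    have hcrit : dT E (Function.update σ' e s(s, b)) a < tval k E a := by
      omega
    have hdefa : 2 * k * dT E (Function.update σ' e s(s, b)) a < dH E a :=
      (tval_lt_iff hk a _).mp hcrit
    have hphieq' : Φ k E (Function.update σ' e s(s, b)) = Φ k E σ₀ := by
      rw [← hphi0]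
      omega
    -- profile
    have hprof3' : ∀ u, u ≠ v → u ≠ a → dT E (Function.update σ' e s(s, b)) u = dT E σ₀ u := by
      intro u huv hua
      by_cases hus : u = s
      · rcases hprof4 with ⟨hsv, hall⟩ | ⟨hsv, h1, h2⟩
        · exact absurd (hus.trans hsv) huv
        · rw [hus, hupds]
          omega
      · rw [hupdo u hus hua]
        exact hprof3 u huv hus
    have hprof4' : (a = v ∧ ∀ u, dT E (Function.update σ' e s(s, b)) u = dT E σ₀ u) ∨
        (a ≠ v ∧ dT E (Function.update σ' e s(s, b)) v = dT E σ₀ v + 1 ∧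
          dT E (Function.update σ' e s(s, b)) a + 1 = dT E σ₀ a) := by
      by_cases hav : a = v
      · left
        refine ⟨hav, fun u => ?_⟩
        rcases hprof4 with ⟨hsv, hall⟩ | ⟨hsv, h1, h2⟩
        · exact absurd (hsv.trans hav.symm) hsa
        · by_cases hus : u = s
          · rw [hus, hupds]
            omega
          · by_cases hua : u = a
            · rw [← hav] at h1
              rw [hua]
              omega
            · have huv : u ≠ v := fun h => hua (h.trans hav.symm)
              rw [hupdo u hus hua]
              exact hprof3 u huv hus
      · right
        refine ⟨hav, ?_, ?_⟩
        · rcases hprof4 with ⟨hsv, hall⟩ | ⟨hsv, h1, h2⟩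
          · rw [← hsv, hupds, hall s]
          · have hvs : v ≠ s := Ne.symm hsv
            have hva : v ≠ a := fun h => hav h.symm
            rw [hupdo v hvs hva]
            exact h1
        · have haa : dT E σ' a = dT E σ₀ a := by
            rcases hprof4 with ⟨hsv, hall⟩ | ⟨hsv, h1, h2⟩
            · exact hall a
            · exact hprof3 a hav (Ne.symm hsa)
          omega
    -- deficiency of new tail
    have hdefa' : 2 * k * dT E (Function.update σ' e s(s, b)) a < dH E a := hdefa
    -- degree at least 2
    have hdeg2'' : a ≠ v → 2 ≤ dT E σ₀ a := by
      intro hav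
      have : dT E σ' a = dT E σ₀ a := by
        rcases hprof4 with ⟨hsv, hall⟩ | ⟨hsv, h1, h2⟩
        · exact hall a
        · exact hprof3 a hav (Ne.symm hsa)
      omega
    -- spoil property
    have hspoil' : ∀ f ∈ E, Function.update σ' e s(s, b) f ≠ σ₀ f →
        ∃ x, x ∈ σ₀ f ∧ ∃ σ'' t'', Casc k E σ₀ v σ'' t'' ∧ t'' = x := by
      intro f hf hne
      by_cases hfe : f = e
      · by_cases holdnew : σ' e = σ₀ e
        · refine ⟨a, ?_, Function.update σ' e s(s, b), a,
            Casc.step e a b hc he hse hns hab hside, rfl⟩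
          rw [hfe, ← holdnew, hab]
          exact Sym2.mem_mk_left _ _
        · rw [hfe]
          exact hspoil e he holdnew
      · rw [Function.update_of_ne hfe] at hne
        exact hspoil f hf hne
    exact ⟨hGood', hphieq', hprof3', hprof4', hdefa', hdeg2'', hspoil'⟩

lemma sym2_exists (q : Sym2 V) : ∃ a b : V, q = s(a, b) :=
  Sym2.ind (fun a b => ⟨a, b, rfl⟩) q

/-- from any cascade state, every hyperedge at the tail not shrunk at the tail
has a σ₀-endpoint which is a cascade tail -/
lemma casc_step_exists (hk : 2 ≤ k) (hG0 : Good E σ₀)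
    (hmax : ∀ τ : Finset V → Sym2 V, Good E τ → Φ k E τ ≤ Φ k E σ₀)
    (hdef : 2 * k * dT E σ₀ v < dH E v)
    {σ' : Finset V → Sym2 V} {t : V} (hc : Casc k E σ₀ v σ' t)
    {e : Finset V} (he : e ∈ E) (hte : t ∈ e) (hnt : t ∉ σ' e) :
    ∃ x, x ∈ σ₀ e ∧ ∃ σ'' t'', Casc k E σ₀ v σ'' t'' ∧ t'' = x := by
  obtain ⟨hGood, _, _, _, _, _, hspoil⟩ := casc_inv hk hG0 hmax hdef hc
  by_cases hold : σ' e = σ₀ e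
  · obtain ⟨a, b, hab⟩ := sym2_exists (σ' e)
    have hreach : (Tof E σ').Reachable t a := hGood.2.2.2.isConnected.preconnected t a
    have hor := reachable_delete_endpoints (b := b) hreach
    rcases hor with hside | hside
    · refine ⟨a, ?_, _, a, Casc.step e a b hc he hte hnt hab (by rw [hab]; exact hside), rfl⟩
      rw [← hold, hab]
      exact Sym2.mem_mk_left _ _
    · have hab' : σ' e = s(b, a) := by rw [hab]; exact Sym2.eq_swap
      refine ⟨b, ?_, _, b, Casc.step e b a hc he hte hnt hab' ?_, rfl⟩
      · rw [← hold, hab]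
        exact Sym2.mem_mk_right _ _
      · rw [hab']
        have : s(b, a) = s(a, b) := Sym2.eq_swap
        rw [this]
        exact hside
  · exact hspoil e he hold

/-- the main counting argument: a maximum-potential shrinking has no deficient vertex -/
lemma no_deficient (hk : 2 ≤ k) (hsimple : ∀ e ∈ E, 2 ≤ e.card)
    (hrank : ∀ e ∈ E, e.card ≤ k) (hG0 : Good E σ₀)
    (hmax : ∀ τ : Finset V → Sym2 V, Good E τ → Φ k E τ ≤ Φ k E σ₀)
    (hdef : 2 * k * dT E σ₀ v < dH E v) : False := by
  classical
  set S : Finset V := Finset.univ.filter (fun u => ∃ σ', Casc k E σ₀ v σ' u) with hS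
  have hvS : v ∈ S := by
    rw [hS, Finset.mem_filter]
    exact ⟨Finset.mem_univ _, σ₀, Casc.base⟩
  have hmemS : ∀ u, u ∈ S ↔ ∃ σ', Casc k E σ₀ v σ' u := by
    intro u
    rw [hS, Finset.mem_filter]
    simp
  -- witness shrinkings
  set W : V → (Finset V → Sym2 V) := fun u =>
    if h : ∃ σ', Casc k E σ₀ v σ' u then h.choose else σ₀ with hW
  have hWc : ∀ u ∈ S, Casc k E σ₀ v (W u) u := by
    intro u hu
    have h := (hmemS u).mp hu
    rw [hW]
    simp only [dif_pos h]
    exact h.choose_spec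
  -- basic facts about members
  have hinv := fun u (hu : u ∈ S) => casc_inv hk hG0 hmax hdef (hWc u hu)
  have hKdeg : ∀ u ∈ S, u ≠ v → dT E (W u) u + 1 = dT E σ₀ u ∧
      2 * k * dT E (W u) u < dH E u ∧ 2 ≤ dT E σ₀ u := by
    intro u hu huv
    obtain ⟨_, _, _, hprof4, hdefu, hdeg2, _⟩ := hinv u hu
    rcases hprof4 with ⟨h1, _⟩ | ⟨_, _, h2⟩
    · exact absurd h1 huv
    · exact ⟨h2, hdefu, hdeg2 huv⟩
  have hVdeg : dT E (W v) v = dT E σ₀ v := by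
    obtain ⟨_, _, _, hprof4, _, _, _⟩ := hinv v hvS
    rcases hprof4 with ⟨_, hall⟩ | ⟨h1, _, _⟩
    · exact hall v
    · exact absurd rfl h1
  -- counting the non-incident hyperedges at each member
  have hFcount : ∀ u ∈ S,
      (E.filter (fun e => u ∈ e ∧ u ∉ (W u) e)).card + dT E (W u) u = dH E u := by
    intro u hu
    obtain ⟨hGoodu, _, _, _, _, _, _⟩ := hinv u hu
    have h1 : (E.filter (fun e => u ∈ e)).filter (fun e => u ∈ (W u) e) =
        E.filter (fun e => u ∈ (W u) e) := by
      rw [Finset.filter_filter]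
      apply Finset.filter_congr
      intro e he
      constructor
      · exact fun h => h.2
      · exact fun h => ⟨hGoodu.1 e he u h, h⟩
    have h2 : (E.filter (fun e => u ∈ e)).filter (fun e => ¬ u ∈ (W u) e) =
        E.filter (fun e => u ∈ e ∧ u ∉ (W u) e) := by
      rw [Finset.filter_filter]
    have h3 := Finset.card_filter_add_card_filter_not
      (s := E.filter (fun e => u ∈ e)) (p := fun e => u ∈ (W u) e)
    rw [h1, h2] at h3
    unfold dT dH
    omega
  -- each such hyperedge has a σ₀-endpoint in S
  have hkey : ∀ u ∈ S, ∀ e ∈ E, u ∈ e → u ∉ (W u) e → ∃ x, x ∈ σ₀ e ∧ x ∈ S := by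
    intro u hu e he hue hnue
    obtain ⟨x, hx, σ'', t'', hc'', ht''⟩ :=
      casc_step_exists hk hG0 hmax hdef (hWc u hu) he hue hnue
    exact ⟨x, hx, (hmemS x).mpr ⟨σ'', ht'' ▸ hc''⟩⟩
  set Ecal : Finset (Finset V) := E.filter (fun e => ∃ x, x ∈ σ₀ e ∧ x ∈ S) with hEcal
  -- upper bound on the total count
  have hsub : ∀ u ∈ S, E.filter (fun e => u ∈ e ∧ u ∉ (W u) e) ⊆
      Ecal.filter (fun e => u ∈ e) := by
    intro u hu e he
    rw [Finset.mem_filter] at he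
    rw [Finset.mem_filter, hEcal, Finset.mem_filter]
    exact ⟨⟨he.1, hkey u hu e he.1 he.2.1 he.2.2⟩, he.2.1⟩
  have hU1 : ∑ u ∈ S, (E.filter (fun e => u ∈ e ∧ u ∉ (W u) e)).card ≤
      ∑ u ∈ S, (Ecal.filter (fun e => u ∈ e)).card :=
    Finset.sum_le_sum (fun u hu => Finset.card_le_card (hsub u hu))
  have hdc1 : ∑ u ∈ S, (Ecal.filter (fun e => u ∈ e)).card =
      ∑ e ∈ Ecal, (S.filter (fun u => u ∈ e)).card := by
    simp only [Finset.card_filter]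
    rw [Finset.sum_comm]
  have hU3 : ∀ e ∈ Ecal, (S.filter (fun u => u ∈ e)).card ≤ k := by
    intro e he
    have h1 : S.filter (fun u => u ∈ e) ⊆ e := fun u hu => (Finset.mem_filter.mp hu).2
    have h2 := Finset.card_le_card h1
    have h3 : e ∈ E := Finset.mem_of_mem_filter e he
    exact h2.trans (hrank e h3)
  have hU : ∑ u ∈ S, (E.filter (fun e => u ∈ e ∧ u ∉ (W u) e)).card ≤ k * Ecal.card := by
    calc ∑ u ∈ S, (E.filter (fun e => u ∈ e ∧ u ∉ (W u) e)).card
        ≤ ∑ e ∈ Ecal, (S.filter (fun u => u ∈ e)).card := by rw [← hdc1]; exact hU1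
      _ ≤ ∑ _e ∈ Ecal, k := Finset.sum_le_sum hU3
      _ = Ecal.card * k := by rw [Finset.sum_const, smul_eq_mul]
      _ = k * Ecal.card := Nat.mul_comm _ _
  -- bound on Ecal.card
  have hU4 : Ecal.card ≤ ∑ u ∈ S, dT E σ₀ u := by
    have h1 : ∀ e ∈ Ecal, 1 ≤ (S.filter (fun u => u ∈ σ₀ e)).card := by
      intro e he
      rw [hEcal, Finset.mem_filter] at he
      obtain ⟨x, hx1, hx2⟩ := he.2
      rw [Nat.one_le_iff_ne_zero, Ne, Finset.card_eq_zero, ← Ne,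
        ← Finset.nonempty_iff_ne_empty]
      exact ⟨x, Finset.mem_filter.mpr ⟨hx2, hx1⟩⟩
    calc Ecal.card = ∑ _e ∈ Ecal, 1 := by rw [Finset.sum_const, smul_eq_mul, Nat.mul_one]
      _ ≤ ∑ e ∈ Ecal, (S.filter (fun u => u ∈ σ₀ e)).card := Finset.sum_le_sum h1
      _ ≤ ∑ e ∈ E, (S.filter (fun u => u ∈ σ₀ e)).card := by
          apply Finset.sum_le_sum_of_subset
          rw [hEcal]
          exact Finset.filter_subset _ _
      _ = ∑ u ∈ S, (E.filter (fun e => u ∈ σ₀ e)).card := by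
          simp only [Finset.card_filter]
          rw [Finset.sum_comm]
      _ = ∑ u ∈ S, dT E σ₀ u := rfl
  -- dT σ₀ v ≥ 1
  have hdHv : 1 ≤ dH E v := by
    by_contra h
    push_neg at h
    omega
  have hv1 : 1 ≤ dT E σ₀ v := by
    obtain ⟨e, he⟩ : (E.filter (fun e => v ∈ e)).Nonempty :=
      Finset.card_pos.mp (by unfold dH at hdHv; omega)
    rw [Finset.mem_filter] at he
    obtain ⟨u, hu, huv⟩ := Finset.exists_mem_ne (s := e)
      (by have := hsimple e he.1; omega) v
    have hreach : (Tof E σ₀).Reachable v u := hG0.2.2.2.isConnected.preconnected v u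
    obtain ⟨w⟩ := hreach
    cases w with
    | nil => exact absurd rfl huv.symm
    | @cons _ z _ hadj p =>
      have h1 : s(v, z) ∈ (Tof E σ₀).edgeSet := hadj
      rw [edgeSet_Tof hG0.2.1] at h1
      obtain ⟨f, hf, hq⟩ := h1
      have : v ∈ σ₀ f := by rw [hq]; exact Sym2.mem_mk_left _ _
      have : f ∈ E.filter (fun e => v ∈ σ₀ e) := Finset.mem_filter.mpr ⟨hf, this⟩
      have := Finset.card_pos.mpr ⟨f, this⟩
      unfold dT
      omega
  -- assemble the arithmetic
  set m1 : ℕ := (S.erase v).card with hm1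
  set SD : ℕ := ∑ u ∈ S, dT E (W u) u with hSD
  set SH : ℕ := ∑ u ∈ S, dH E u with hSH
  set D : ℕ := ∑ u ∈ S, dT E σ₀ u with hD
  set P : ℕ := ∑ u ∈ S, (E.filter (fun e => u ∈ e ∧ u ∉ (W u) e)).card with hP
  have hvne : v ∉ S.erase v := Finset.notMem_erase v S
  have hScard : S.card = m1 + 1 := by
    rw [hm1, Finset.card_erase_of_mem hvS]
    have : 1 ≤ S.card := Finset.card_pos.mpr ⟨v, hvS⟩
    omega
  have e1 : P + SD = SH := by
    rw [hP, hSD, hSH, ← Finset.sum_add_distrib]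
    exact Finset.sum_congr rfl (fun u hu => hFcount u hu)
  have e2 : SD + m1 = D := by
    have hterm : ∀ u ∈ S, dT E (W u) u + (if u = v then 0 else 1) = dT E σ₀ u := by
      intro u hu
      by_cases huv : u = v
      · rw [huv, if_pos rfl, Nat.add_zero, hVdeg]
      · rw [if_neg huv]
        exact (hKdeg u hu huv).1
    have hsum : ∑ u ∈ S, (dT E (W u) u + (if u = v then 0 else 1)) = D :=
      Finset.sum_congr rfl hterm
    rw [Finset.sum_add_distrib] at hsum
    have hite : ∑ u ∈ S, (if u = v then (0 : ℕ) else 1) = m1 := by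
      rw [← Finset.insert_erase hvS, Finset.sum_insert hvne, if_pos rfl]
      rw [Finset.sum_congr rfl (fun u hu => if_neg (Finset.ne_of_mem_erase hu))]
      rw [Finset.sum_const, smul_eq_mul, Nat.mul_one, Nat.zero_add, hm1]
    rw [hite] at hsum
    exact hsum
  have e3 : 2 * k * D + (m1 + 1) ≤ SH + 2 * k * m1 := by
    have hper : ∀ u ∈ S, 2 * k * dT E σ₀ u + 1 ≤ dH E u + (if u = v then 0 else 2 * k) := by
      intro u hu
      by_cases huv : u = v
      · rw [huv, if_pos rfl]
        omega
      · rw [if_neg huv]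
        obtain ⟨h1, h2, _⟩ := hKdeg u hu huv
        have h3 : 2 * k * (dT E (W u) u + 1) = 2 * k * dT E (W u) u + 2 * k := by ring
        rw [← h1]
        omega
    have hsum := Finset.sum_le_sum hper
    have hL : ∑ u ∈ S, (2 * k * dT E σ₀ u + 1) = 2 * k * D + (m1 + 1) := by
      rw [Finset.sum_add_distrib, ← Finset.mul_sum, Finset.sum_const, smul_eq_mul,
        Nat.mul_one, ← hD, ← hScard]
    have hR : ∑ u ∈ S, (dH E u + (if u = v then 0 else 2 * k)) = SH + 2 * k * m1 := by
      rw [Finset.sum_add_distrib, ← hSH]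
      congr 1
      rw [← Finset.insert_erase hvS, Finset.sum_insert hvne, if_pos rfl]
      rw [Finset.sum_congr rfl (fun u hu => if_neg (Finset.ne_of_mem_erase hu))]
      rw [Finset.sum_const, smul_eq_mul, Nat.zero_add, hm1, Nat.mul_comm]
    rw [hL, hR] at hsum
    exact hsum
  have e6 : 2 * m1 + 1 ≤ D := by
    have h1 : ∑ u ∈ S.erase v, 2 ≤ ∑ u ∈ S.erase v, dT E σ₀ u := by
      apply Finset.sum_le_sum
      intro u hu
      exact (hKdeg u (Finset.mem_of_mem_erase hu) (Finset.ne_of_mem_erase hu)).2.2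
    rw [Finset.sum_const, smul_eq_mul] at h1
    have h2 : D = dT E σ₀ v + ∑ u ∈ S.erase v, dT E σ₀ u := by
      rw [hD]
      exact (Finset.add_sum_erase S (fun u => dT E σ₀ u) hvS).symm
    omega
  -- final contradiction
  have hkm : k = (k - 1) + 1 := by omega
  have hZ : k * D = (k - 1) * D + D := by
    conv_lhs => rw [hkm]
    rw [Nat.add_mul, Nat.one_mul]
  have hZm : k * m1 = (k - 1) * m1 + m1 := by
    conv_lhs => rw [hkm]
    rw [Nat.add_mul, Nat.one_mul]
  have hA : (k - 1) * (2 * m1 + 1) ≤ (k - 1) * D := Nat.mul_le_mul_left _ e6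
  have hA2 : (k - 1) * (2 * m1 + 1) = 2 * ((k - 1) * m1) + (k - 1) := by ring
  have hW2 : k * Ecal.card ≤ k * D := Nat.mul_le_mul_left k hU4
  have h2kD : 2 * k * D = 2 * (k * D) := by ring
  have h2km1 : 2 * k * m1 = 2 * (k * m1) := by ring
  have hPU : P ≤ k * Ecal.card := hU
  omega

end CascSec

end HShrink

/-- **Theorem (shrinking with a `d_H(v)/(2k)` degree bound).**
Let `H = (V, E)` be a hypertree in which every hyperedge has size at most `k`,
where `k ≥ 2`.  Then `H` can be shrunk to a tree `T` on the same vertex set such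
that for every vertex `v`, the degree of `v` in `T` is at least `d_H(v)/(2k)`. -/
theorem hypertree_shrink_degree_half_k_bound
    {V : Type*} [Fintype V] [DecidableEq V] [Nonempty V]
    (k : ℕ) (hk : 2 ≤ k)
    (E : Finset (Finset V))
    (hsimple : ∀ e ∈ E, 2 ≤ e.card)
    (hrank : ∀ e ∈ E, e.card ≤ k)
    (hsub : ∀ X : Finset V, (E.filter (fun e => e ⊆ X)).card ≤ X.card - 1)
    (hfull : E.card = Fintype.card V - 1) :
    ∃ (T : SimpleGraph V) (σ : Finset V → Sym2 V),
      T.IsTree ∧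
      (∀ e ∈ E, ¬ (σ e).IsDiag) ∧
      (∀ e ∈ E, ∀ v ∈ σ e, v ∈ e) ∧
      Set.BijOn σ ↑E T.edgeSet ∧
      ∀ v : V,
        ((E.filter (fun e => v ∈ e)).card : ℝ) / (2 * k) ≤
          ((T.neighborSet v).ncard : ℝ) := by
  classical
  obtain ⟨σ1, hG1⟩ := HShrink.ex_good (E := E) hsimple hsub hfull
  obtain ⟨σ₀, hσ₀mem, hσ₀max⟩ := Finset.exists_max_image
    (Finset.univ.filter (fun σ : Finset V → Sym2 V => HShrink.Good E σ))
    (fun σ => HShrink.Φ k E σ)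
    ⟨σ1, Finset.mem_filter.mpr ⟨Finset.mem_univ _, hG1⟩⟩
  have hG0 : HShrink.Good E σ₀ := (Finset.mem_filter.mp hσ₀mem).2
  have hmax : ∀ τ : Finset V → Sym2 V, HShrink.Good E τ →
      HShrink.Φ k E τ ≤ HShrink.Φ k E σ₀ := by
    intro τ hτ
    exact hσ₀max τ (Finset.mem_filter.mpr ⟨Finset.mem_univ _, hτ⟩)
  have hnodef : ∀ u : V, HShrink.dH E u ≤ 2 * k * HShrink.dT E σ₀ u := by
    intro u
    by_contra h
    push_neg at h
    exact HShrink.no_deficient hk hsimple hrank hG0 hmax h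
  have hES : (HShrink.Tof E σ₀).edgeSet = σ₀ '' (E : Set (Finset V)) :=
    HShrink.edgeSet_Tof hG0.2.1
  refine ⟨HShrink.Tof E σ₀, σ₀, hG0.2.2.2, hG0.2.1, hG0.1, ?_, ?_⟩
  · refine ⟨?_, hG0.2.2.1, ?_⟩
    · intro e he
      rw [hES]
      exact ⟨e, he, rfl⟩
    · rw [hES]
      exact Set.Subset.refl _
  · intro u
    have h1 : ((HShrink.Tof E σ₀).neighborSet u).ncard = HShrink.dT E σ₀ u :=
      HShrink.ncard_neighbor hG0 u
    rw [h1]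
    have hpos : (0 : ℝ) < 2 * k := by
      have : (0 : ℕ) < 2 * k := by omega
      exact_mod_cast this
    rw [div_le_iff₀ hpos]
    have h2 : HShrink.dH E u ≤ HShrink.dT E σ₀ u * (2 * k) := by
      rw [Nat.mul_comm]
      exact hnodef u
    have h3 : (E.filter (fun e => u ∈ e)).card = HShrink.dH E u := rfl
    rw [h3]
    exact_mod_cast h2
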